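/- If G ≤ Sym(Γ) and H ≤ Sym(Δ) are both primitive permutation groups on finite sets, then the direct product G×H in its product action on Γ×Δ is pre-primitive. -/

import Mathlib

open Equiv

variable {Ω : Type*}

/-- `G` is a transitive permutation group on `Ω`. -/
def IsTransitive (G : Subgroup (Perm Ω)) : Prop :=
  ∀ x y : Ω, ∃ g ∈ G, g x = y

/-- The partition (setoid) `r` of `Ω` is `G`-invariant. -/
def IsInvariantPartition (G : Subgroup (Perm Ω)) (r : Setoid Ω) : Prop :=
  ∀ g ∈ G, ∀ x y : Ω, r.r x y → r.r (g x) (g y)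

/-- The partition `r` of `Ω` is the orbit partition of the permutation group `H`. -/
def IsOrbitPartition (H : Subgroup (Perm Ω)) (r : Setoid Ω) : Prop :=
  ∀ x y : Ω, r.r x y ↔ ∃ h ∈ H, h x = y

/-- `G` is pre-primitive: every `G`-invariant partition is the orbit partition
of a subgroup of `G`. -/
def IsPrePrimitive (G : Subgroup (Perm Ω)) : Prop :=
  ∀ r : Setoid Ω, IsInvariantPartition G r → ∃ H ≤ G, IsOrbitPartition H r

/-- `N` is a normal subgroup of the permutation group `G`. -/
def IsNormalIn (N G : Subgroup (Perm Ω)) : Prop :=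
  N ≤ G ∧ ∀ g ∈ G, ∀ n ∈ N, g * n * g⁻¹ ∈ N


/-- The coordinatewise (product) action homomorphism. -/
def prodPermHom (Γ Δ : Type*) : Perm Γ × Perm Δ →* Perm (Γ × Δ) where
  toFun p := Equiv.prodCongr p.1 p.2
  map_one' := by ext ⟨a, b⟩ <;> rfl
  map_mul' p q := by ext ⟨a, b⟩ <;> rfl

/-- The direct product `G × H` in its coordinatewise product action on `Γ × Δ`,
as a subgroup of `Perm (Γ × Δ)`. -/
def productAction {Γ Δ : Type*} (G : Subgroup (Perm Γ)) (H : Subgroup (Perm Δ)) :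
    Subgroup (Perm (Γ × Δ)) :=
  (G.prod H).map (prodPermHom Γ Δ)

/-- Auxiliary setoid on `Γ`: two points are related if whole rows are related pointwise. -/
def S1 {Γ Δ : Type*} (r : Setoid (Γ × Δ)) : Setoid Γ :=
  ⟨fun a a' => ∀ b, r.r (a, b) (a', b),
   ⟨fun _ _ => r.iseqv.refl _, fun h b => r.iseqv.symm (h b),
    fun h h' b => r.iseqv.trans (h b) (h' b)⟩⟩

/-- Auxiliary setoid on `Δ`: columns related pointwise. -/
def S2 {Γ Δ : Type*} (r : Setoid (Γ × Δ)) : Setoid Δ :=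
  ⟨fun b b' => ∀ a, r.r (a, b) (a, b'),
   ⟨fun _ _ => r.iseqv.refl _, fun h a => r.iseqv.symm (h a),
    fun h h' a => r.iseqv.trans (h a) (h' a)⟩⟩

/-- Auxiliary setoid on `Γ`: projected relation (symmetrized). -/
def SS {Γ Δ : Type*} (r : Setoid (Γ × Δ)) : Setoid Γ :=
  ⟨fun a a' => (∀ b, ∃ b', r.r (a, b) (a', b')) ∧ (∀ b, ∃ b', r.r (a', b) (a, b')),
   ⟨fun _ => ⟨fun b => ⟨b, r.iseqv.refl _⟩, fun b => ⟨b, r.iseqv.refl _⟩⟩,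
    fun h => ⟨h.2, h.1⟩,
    fun h h' =>
      ⟨fun b => let ⟨b₁, p⟩ := h.1 b; let ⟨b₂, q⟩ := h'.1 b₁; ⟨b₂, r.iseqv.trans p q⟩,
       fun b => let ⟨b₁, p⟩ := h'.2 b; let ⟨b₂, q⟩ := h.2 b₁; ⟨b₂, r.iseqv.trans p q⟩⟩⟩⟩

/-- Auxiliary setoid on `Δ`: projected relation (symmetrized). -/
def TT {Γ Δ : Type*} (r : Setoid (Γ × Δ)) : Setoid Δ :=
  ⟨fun b b' => (∀ a, ∃ a', r.r (a, b) (a', b')) ∧ (∀ a, ∃ a', r.r (a, b') (a', b)),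
   ⟨fun _ => ⟨fun a => ⟨a, r.iseqv.refl _⟩, fun a => ⟨a, r.iseqv.refl _⟩⟩,
    fun h => ⟨h.2, h.1⟩,
    fun h h' =>
      ⟨fun a => let ⟨a₁, p⟩ := h.1 a; let ⟨a₂, q⟩ := h'.1 a₁; ⟨a₂, r.iseqv.trans p q⟩,
       fun a => let ⟨a₁, p⟩ := h'.2 a; let ⟨a₂, q⟩ := h.2 a₁; ⟨a₂, r.iseqv.trans p q⟩⟩⟩⟩

/-- Auxiliary "coset" setoid used to prove that a regular primitive group is abelian. -/
def cosetSetoid {Δ : Type*} (N : Subgroup (Perm Δ)) (c : Δ → Perm Δ) : Setoid Δ :=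
  ⟨fun b b' => (c b)⁻¹ * c b' ∈ N,
   ⟨fun b => by simpa using N.one_mem,
    fun {b b'} h => by simpa [mul_inv_rev] using N.inv_mem h,
    fun {b b' b''} h h' => by simpa [mul_assoc] using N.mul_mem h h'⟩⟩

theorem product_of_primitive_preprimitive
    {Γ Δ : Type*} [Fintype Γ] [Fintype Δ]
    (G : Subgroup (Perm Γ)) (H : Subgroup (Perm Δ))
    (hG : IsTransitive G) (hH : IsTransitive H)
    (hGprim : ∀ r : Setoid Γ, IsInvariantPartition G r → r = ⊥ ∨ r = ⊤)
    (hHprim : ∀ r : Setoid Δ, IsInvariantPartition H r → r = ⊥ ∨ r = ⊤) :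
    IsPrePrimitive (productAction G H) := by
  intro r hr
  have hmem : ∀ g ∈ G, ∀ h ∈ H, prodPermHom Γ Δ (g, h) ∈ productAction G H :=
    fun g hg h hh => Subgroup.mem_map.mpr ⟨(g, h), Subgroup.mem_prod.mpr ⟨hg, hh⟩, rfl⟩
  have hinv : ∀ g ∈ G, ∀ h ∈ H, ∀ (a a' : Γ) (b b' : Δ),
      r.r (a, b) (a', b') → r.r (g a, h b) (g a', h b') := by
    intro g hg h hh a a' b b' hab
    exact hr (prodPermHom Γ Δ (g, h)) (hmem g hg h hh) (a, b) (a', b') hab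
  -- invariance of the auxiliary setoids
  have hS1inv : IsInvariantPartition G (S1 r) := by
    intro g hg a a' hs
    have hs' : ∀ b, r.r (a, b) (a', b) := hs
    exact fun b => hinv g hg 1 H.one_mem a a' b b (hs' b)
  have hS2inv : IsInvariantPartition H (S2 r) := by
    intro h hh b b' hs
    have hs' : ∀ a, r.r (a, b) (a, b') := hs
    exact fun a => hinv 1 G.one_mem h hh a a b b' (hs' a)
  have hSSinv : IsInvariantPartition G (SS r) := by
    intro g hg a a' hs
    have hs' : (∀ b, ∃ b', r.r (a, b) (a', b')) ∧ (∀ b, ∃ b', r.r (a', b) (a, b')) := hs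
    refine ⟨fun b => ?_, fun b => ?_⟩
    · obtain ⟨b', p⟩ := hs'.1 b
      exact ⟨b', hinv g hg 1 H.one_mem a a' b b' p⟩
    · obtain ⟨b', p⟩ := hs'.2 b
      exact ⟨b', hinv g hg 1 H.one_mem a' a b b' p⟩
  have hTTinv : IsInvariantPartition H (TT r) := by
    intro h hh b b' hs
    have hs' : (∀ a, ∃ a', r.r (a, b) (a', b')) ∧ (∀ a, ∃ a', r.r (a, b') (a', b)) := hs
    refine ⟨fun a => ?_, fun a => ?_⟩
    · obtain ⟨a', p⟩ := hs'.1 a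
      exact ⟨a', hinv 1 G.one_mem h hh a a' b b' p⟩
    · obtain ⟨a', p⟩ := hs'.2 a
      exact ⟨a', hinv 1 G.one_mem h hh a a' b' b p⟩
  rcases hGprim (S1 r) hS1inv with h1 | h1 <;> rcases hHprim (S2 r) hS2inv with h2 | h2
  -- Case s1 = ⊥, s2 = ⊥ : the hard case, treated below.
  · -- consequences of bottom-ness
    have hs1bot : ∀ a a', (∀ b, r.r (a, b) (a', b)) → a = a' := by
      intro a a' hp
      have h' : (S1 r).r a a' := hp
      rw [h1] at h'
      exact h'
    have hs2bot : ∀ b b', (∀ a, r.r (a, b) (a, b')) → b = b' := by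
      intro b b' hp
      have h' : (S2 r).r b b' := hp
      rw [h2] at h'
      exact h'
    have hall1' : ∀ {x x' : Γ} {y : Δ}, r.r (x, y) (x', y) → x = x' := by
      intro x x' y hxy
      refine hs1bot x x' (fun c => ?_)
      obtain ⟨h, hh, hhb⟩ := hH y c
      have := hinv 1 G.one_mem h hh x x' y y hxy
      simpa [hhb] using this
    have hall2' : ∀ {y y' : Δ} {x : Γ}, r.r (x, y) (x, y') → y = y' := by
      intro y y' x hxy
      refine hs2bot y y' (fun a'' => ?_)
      obtain ⟨g, hg, hgx⟩ := hG x a''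
      have := hinv g hg 1 H.one_mem x x y y' hxy
      simpa [hgx] using this
    have hSScases := hGprim (SS r) hSSinv
    have hTTcases := hHprim (TT r) hTTinv
    -- if either projected setoid is ⊥ then r = ⊥
    by_cases hbot : ∀ x y : Γ × Δ, r.r x y → x = y
    · refine ⟨⊥, bot_le, fun x y => ⟨fun hxy => ?_, fun ⟨k, hk, hkx⟩ => ?_⟩⟩
      · exact ⟨1, Subgroup.one_mem ⊥, by rw [hbot x y hxy]; rfl⟩
      · have hk1 : k = 1 := Subgroup.mem_bot.mp hk
        rw [hk1] at hkx
        have hxy : x = y := hkx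
        subst hxy
        exact r.iseqv.refl x
    · -- both projected setoids are ⊤
      have hSS : SS r = ⊤ := by
        rcases hSScases with hS | hS
        · exfalso
          apply hbot
          rintro ⟨a, b⟩ ⟨a', b'⟩ hxy
          have hss : (SS r).r a a' := by
            refine ⟨fun c => ?_, fun c => ?_⟩
            · obtain ⟨h, hh, hhb⟩ := hH b c
              refine ⟨h b', ?_⟩
              have := hinv 1 G.one_mem h hh a a' b b' hxy
              simpa [hhb] using this
            · obtain ⟨h, hh, hhb⟩ := hH b' c
              refine ⟨h b, ?_⟩
              have := hinv 1 G.one_mem h hh a' a b' b (r.iseqv.symm hxy)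
              simpa [hhb] using this
          rw [hS] at hss
          rw [hss] at hxy ⊢
          rw [hall2' hxy]
        · exact hS
      have hTT : TT r = ⊤ := by
        rcases hTTcases with hT | hT
        · exfalso
          apply hbot
          rintro ⟨a, b⟩ ⟨a', b'⟩ hxy
          have htt : (TT r).r b b' := by
            refine ⟨fun x => ?_, fun x => ?_⟩
            · obtain ⟨g, hg, hgx⟩ := hG a x
              refine ⟨g a', ?_⟩
              have := hinv g hg 1 H.one_mem a a' b b' hxy
              simpa [hgx] using this
            · obtain ⟨g, hg, hgx⟩ := hG a' x
              refine ⟨g a, ?_⟩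
              have := hinv g hg 1 H.one_mem a' a b' b (r.iseqv.symm hxy)
              simpa [hgx] using this
          rw [hT] at htt
          rw [htt] at hxy ⊢
          rw [hall1' hxy]
        · exact hT
      -- existence lemmas
      have E1 : ∀ (a : Γ) (b : Δ) (x : Γ), ∃ y, r.r (a, b) (x, y) := by
        intro a b x
        have h' : (SS r).r a x := by rw [hSS]; trivial
        exact h'.1 b
      have E2 : ∀ (a : Γ) (b : Δ) (y : Δ), ∃ x, r.r (a, b) (x, y) := by
        intro a b y
        have h' : (TT r).r b y := by rw [hTT]; trivial
        exact h'.1 a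
      choose φ hφ using E1
      have φuniq : ∀ {a b x y}, r.r (a, b) (x, y) → y = φ a b x := by
        intro a b x y hxy
        exact hall2' (r.iseqv.trans (r.iseqv.symm hxy) (hφ a b x))
      have φid : ∀ a b, φ a b a = b := fun a b => (φuniq (r.iseqv.refl (a, b))).symm
      have φsurj : ∀ a b y, ∃ x, φ a b x = y := by
        intro a b y
        obtain ⟨x, hx⟩ := E2 a b y
        exact ⟨x, (φuniq hx).symm⟩
      have coher : ∀ {a b a'' b''}, r.r (a, b) (a'', b'') → ∀ x, φ a'' b'' x = φ a b x :=
        fun h x => φuniq (r.iseqv.trans h (hφ _ _ x))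
      have Hφ : ∀ a b, ∀ h ∈ H, ∀ x, φ a (h b) x = h (φ a b x) := by
        intro a b h hh x
        have := hinv 1 G.one_mem h hh a x b (φ a b x) (hφ a b x)
        exact (φuniq this).symm
      have Gφ : ∀ a b, ∀ g ∈ G, ∀ x, φ (g a) b (g x) = φ a b x := by
        intro a b g hg x
        have := hinv g hg 1 H.one_mem a x b (φ a b x) (hφ a b x)
        exact (φuniq this).symm
      -- H acts freely
      have hfreeH : ∀ (a : Γ), ∀ h ∈ H, ∀ b, h b = b → h = 1 := by
        intro a h hh b hb
        apply Equiv.ext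
        intro y
        obtain ⟨x, hx⟩ := φsurj a b y
        have h1' : φ a (h b) x = h (φ a b x) := Hφ a b h hh x
        rw [hb, hx] at h1'
        simpa using h1'.symm
      have hfreeH' : ∀ (a : Γ), ∀ h₁ ∈ H, ∀ h₂ ∈ H, ∀ b, h₁ b = h₂ b → h₁ = h₂ := by
        intro a h₁ hh₁ h₂ hh₂ b hagree
        have hfix : (h₂⁻¹ * h₁) b = b := by
          simp [Perm.mul_apply, hagree]
        have := hfreeH a (h₂⁻¹ * h₁) (H.mul_mem (H.inv_mem hh₂) hh₁) b hfix
        exact (inv_mul_eq_one.mp this).symm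
      -- H is abelian
      have habel : ∀ (a : Γ) (b₀ : Δ), ∀ h₁ ∈ H, ∀ h₂ ∈ H, h₁ * h₂ = h₂ * h₁ := by
        intro a b₀ h₁ hh₁ h₂ hh₂
        have hdich : ∀ N : Subgroup (Perm Δ), N ≤ H →
            (∀ n ∈ N, n = 1) ∨ (∀ h ∈ H, h ∈ N) := by
          intro N hNH
          choose c hcH hcb using fun b => hH b₀ b
          have hcb0 : c b₀ = 1 := hfreeH a (c b₀) (hcH b₀) b₀ (hcb b₀)
          have hch : ∀ h ∈ H, ∀ b, c (h b) = h * c b := by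
            intro h hh b
            refine hfreeH' a _ (hcH _) _ (H.mul_mem hh (hcH b)) b₀ ?_
            rw [hcb]
            simp [Perm.mul_apply, hcb]
          have huinv : IsInvariantPartition H (cosetSetoid N c) := by
            intro h hh b b' hbb'
            have hbb'' : (c b)⁻¹ * c b' ∈ N := hbb'
            show (c (h b))⁻¹ * c (h b') ∈ N
            rw [hch h hh b, hch h hh b']
            simpa [mul_assoc, mul_inv_rev] using hbb''
          rcases hHprim (cosetSetoid N c) huinv with hu | hu
          · left
            intro n hn
            have hnH := hNH hn
            have hcn : c (n b₀) = n := hfreeH' a _ (hcH _) n hnH b₀ (hcb _)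
            have hrel : (cosetSetoid N c).r b₀ (n b₀) := by
              show (c b₀)⁻¹ * c (n b₀) ∈ N
              rw [hcb0, hcn]
              simpa using hn
            rw [hu] at hrel
            exact hfreeH a n hnH b₀ hrel.symm
          · right
            intro h hh
            have hrel : (cosetSetoid N c).r b₀ (h b₀) := by rw [hu]; trivial
            have hrel' : (c b₀)⁻¹ * c (h b₀) ∈ N := hrel
            rw [hcb0, hch h hh b₀, hcb0] at hrel'
            simpa using hrel'
        rcases hdich (Subgroup.zpowers h₁) (Subgroup.zpowers_le.mpr hh₁) with hc | hc
        · rw [hc h₁ (Subgroup.mem_zpowers h₁)]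
          simp
        · obtain ⟨k, hk⟩ := Subgroup.mem_zpowers_iff.mp (hc h₂ hh₂)
          rw [← hk]
          exact ((Commute.refl h₁).zpow_right k).eq
      -- the subgroup K of class-preserving elements
      let K : Subgroup (Perm (Γ × Δ)) :=
        { carrier := {π | π ∈ productAction G H ∧ ∀ x, r.r (π x) x}
          mul_mem' := fun {p q} hp hq =>
            ⟨mul_mem hp.1 hq.1, fun x => r.iseqv.trans (hp.2 (q x)) (hq.2 x)⟩
          one_mem' := ⟨one_mem _, fun x => r.iseqv.refl x⟩
          inv_mem' := fun {p} hp => ⟨inv_mem hp.1, fun x => by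
            have := hp.2 (p⁻¹ x)
            rw [show p (p⁻¹ x) = x from p.apply_symm_apply x] at this
            exact r.iseqv.symm this⟩ }
      have hKmem : ∀ k : Perm (Γ × Δ),
          k ∈ K ↔ (k ∈ productAction G H ∧ ∀ x, r.r (k x) x) := fun k => Iff.rfl
      refine ⟨K, fun π hπ => ((hKmem π).mp hπ).1, fun x y => ⟨fun hxy => ?_, fun hky => ?_⟩⟩
      · -- forward direction
        obtain ⟨a, b⟩ := x
        obtain ⟨a', b'⟩ := y
        obtain ⟨g, hg, hga⟩ := hG a a'
        obtain ⟨c, hcc⟩ : ∃ y, r.r (g⁻¹ a, b) (a, y) := ⟨_, hφ (g⁻¹ a) b a⟩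
        have hc' : r.r (a, c) (g⁻¹ a, b) := r.iseqv.symm hcc
        obtain ⟨h₂, hh₂, hh₂b⟩ := hH b c
        have key : ∀ x, φ a b (g x) = h₂ (φ a b x) := by
          intro x
          have e1 := Gφ a b g⁻¹ (G.inv_mem hg) (g x)
          rw [show g⁻¹ (g x) = x from g.symm_apply_apply x] at e1
          have e2 : ∀ z, φ (g⁻¹ a) b z = φ a c z := coher hc'
          have e3 : φ a c x = h₂ (φ a b x) := by
            rw [← hh₂b]
            exact Hφ a b h₂ hh₂ x
          rw [← e1, e2, e3]
        have hh₂b' : h₂ b = b' := by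
          have hk1 := key a
          rw [hga, φid a b] at hk1
          have hk2 : b' = φ a b a' := φuniq hxy
          rw [hk2]
          exact hk1.symm
        refine ⟨prodPermHom Γ Δ (g, h₂), (hKmem _).mpr ⟨hmem g hg h₂ hh₂, ?_⟩, ?_⟩
        · rintro ⟨x, y⟩
          show r.r (g x, h₂ y) (x, y)
          obtain ⟨c₃, hc₃⟩ : ∃ y', r.r (x, y) (a, y') := ⟨_, hφ x y a⟩
          have hc₃' : r.r (a, c₃) (x, y) := r.iseqv.symm hc₃
          obtain ⟨h₃, hh₃, hh₃b⟩ := hH b c₃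
          have hy : y = φ a c₃ x := φuniq hc₃'
          have hgoal : h₂ y = φ a c₃ (g x) := by
            rw [hy, ← hh₃b, Hφ a b h₃ hh₃ x, Hφ a b h₃ hh₃ (g x), key x]
            have hcomm := habel a b h₂ hh₂ h₃ hh₃
            calc h₂ (h₃ (φ a b x)) = (h₂ * h₃) (φ a b x) := rfl
              _ = (h₃ * h₂) (φ a b x) := by rw [hcomm]
              _ = h₃ (h₂ (φ a b x)) := rfl
          have h5 := hφ a c₃ (g x)
          rw [← hgoal] at h5
          exact r.iseqv.trans (r.iseqv.symm h5) hc₃'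
        · show (g a, h₂ b) = (a', b')
          rw [hga, hh₂b']
      · obtain ⟨k, hk, hkx⟩ := hky
        have := ((hKmem k).mp hk).2 x
        rw [hkx] at this
        exact r.iseqv.symm this
  -- Case s1 = ⊥, s2 = ⊤
  · have htop2 : ∀ (b b' : Δ) (a : Γ), r.r (a, b) (a, b') := by
      intro b b' a
      have h' : (S2 r).r b b' := by rw [h2]; trivial
      exact h' a
    have hs1bot : ∀ a a', (∀ b, r.r (a, b) (a', b)) → a = a' := by
      intro a a' hp
      have h' : (S1 r).r a a' := hp
      rw [h1] at h'
      exact h'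
    have ha_eq : ∀ (a a' : Γ) (b b' : Δ), r.r (a, b) (a', b') → a = a' := by
      intro a a' b b' hxy
      have hxy' : r.r (a, b) (a', b) := r.iseqv.trans hxy (htop2 b' b a')
      refine hs1bot a a' (fun c => ?_)
      obtain ⟨h, hh, hhb⟩ := hH b c
      have := hinv 1 G.one_mem h hh a a' b b hxy'
      simpa [hhb] using this
    refine ⟨Subgroup.map (prodPermHom Γ Δ) ((⊥ : Subgroup (Perm Γ)).prod H),
        ?_, fun x y => ⟨fun hxy => ?_, fun ⟨k, hk, hkx⟩ => ?_⟩⟩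
    · intro π hπ
      obtain ⟨⟨g, h⟩, hgh, rfl⟩ := Subgroup.mem_map.mp hπ
      have hg1 : g = 1 := Subgroup.mem_bot.mp (Subgroup.mem_prod.mp hgh).1
      exact hmem g (hg1 ▸ G.one_mem) h (Subgroup.mem_prod.mp hgh).2
    · obtain ⟨a, b⟩ := x
      obtain ⟨a', b'⟩ := y
      obtain ⟨h, hh, hhb⟩ := hH b b'
      refine ⟨prodPermHom Γ Δ (1, h),
        Subgroup.mem_map.mpr ⟨(1, h), Subgroup.mem_prod.mpr ⟨Subgroup.mem_bot.mpr rfl, hh⟩, rfl⟩, ?_⟩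
      show ((1 : Perm Γ) a, h b) = (a', b')
      rw [hhb]
      simp [ha_eq a a' b b' hxy]
    · obtain ⟨⟨g, h⟩, hgh, rfl⟩ := Subgroup.mem_map.mp hk
      have hg1 : g = 1 := Subgroup.mem_bot.mp (Subgroup.mem_prod.mp hgh).1
      subst hg1
      rw [← hkx]
      obtain ⟨a, b⟩ := x
      exact htop2 b (h b) a
  -- Case s1 = ⊤, s2 = ⊥
  · have htop1 : ∀ (a a' : Γ) (b : Δ), r.r (a, b) (a', b) := by
      intro a a' b
      have h' : (S1 r).r a a' := by rw [h1]; trivial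
      exact h' b
    have hs2bot : ∀ b b', (∀ a, r.r (a, b) (a, b')) → b = b' := by
      intro b b' hp
      have h' : (S2 r).r b b' := hp
      rw [h2] at h'
      exact h'
    have hb_eq : ∀ (a a' : Γ) (b b' : Δ), r.r (a, b) (a', b') → b = b' := by
      intro a a' b b' hxy
      have hxy' : r.r (a', b) (a', b') := r.iseqv.trans (htop1 a' a b) hxy
      refine hs2bot b b' (fun x => ?_)
      obtain ⟨g, hg, hgx⟩ := hG a' x
      have := hinv g hg 1 H.one_mem a' a' b b' hxy'
      simpa [hgx] using this
    refine ⟨Subgroup.map (prodPermHom Γ Δ) (G.prod (⊥ : Subgroup (Perm Δ))),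
        ?_, fun x y => ⟨fun hxy => ?_, fun ⟨k, hk, hkx⟩ => ?_⟩⟩
    · intro π hπ
      obtain ⟨⟨g, h⟩, hgh, rfl⟩ := Subgroup.mem_map.mp hπ
      have hh1 : h = 1 := Subgroup.mem_bot.mp (Subgroup.mem_prod.mp hgh).2
      exact hmem g (Subgroup.mem_prod.mp hgh).1 h (hh1 ▸ H.one_mem)
    · obtain ⟨a, b⟩ := x
      obtain ⟨a', b'⟩ := y
      obtain ⟨g, hg, hga⟩ := hG a a'
      refine ⟨prodPermHom Γ Δ (g, 1),
        Subgroup.mem_map.mpr ⟨(g, 1), Subgroup.mem_prod.mpr ⟨hg, Subgroup.mem_bot.mpr rfl⟩, rfl⟩, ?_⟩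
      show (g a, (1 : Perm Δ) b) = (a', b')
      rw [hga]
      simp [hb_eq a a' b b' hxy]
    · obtain ⟨⟨g, h⟩, hgh, rfl⟩ := Subgroup.mem_map.mp hk
      have hh1 : h = 1 := Subgroup.mem_bot.mp (Subgroup.mem_prod.mp hgh).2
      subst hh1
      rw [← hkx]
      obtain ⟨a, b⟩ := x
      exact htop1 a (g a) b
  -- Case s1 = ⊤, s2 = ⊤
  · have htop1 : ∀ (a a' : Γ) (b : Δ), r.r (a, b) (a', b) := by
      intro a a' b
      have h' : (S1 r).r a a' := by rw [h1]; trivial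
      exact h' b
    have htop2 : ∀ (b b' : Δ) (a : Γ), r.r (a, b) (a, b') := by
      intro b b' a
      have h' : (S2 r).r b b' := by rw [h2]; trivial
      exact h' a
    refine ⟨productAction G H, le_rfl, fun x y => ⟨fun _ => ?_, fun ⟨k, hk, hkx⟩ => ?_⟩⟩
    · obtain ⟨g, hg, hga⟩ := hG x.1 y.1
      obtain ⟨h, hh, hhb⟩ := hH x.2 y.2
      refine ⟨prodPermHom Γ Δ (g, h), hmem g hg h hh, ?_⟩
      show (g x.1, h x.2) = y
      rw [hga, hhb]
    · obtain ⟨⟨g, h⟩, hgh, rfl⟩ := Subgroup.mem_map.mp hk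
      rw [← hkx]
      obtain ⟨a, b⟩ := x
      exact r.iseqv.trans (htop1 a (g a) b) (htop2 b (h b) (g a))
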